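/- Let w be a 2D word of size (m,n) with m,n ≥ 1, and let PALConj(w) denote the set of 2D palindromes in the conjugacy class of w. Then |PALConj(w)| ≤ 4 if m and n are both even; |PALConj(w)| ≤ 1 if m and n are both odd; and |PALConj(w)| ≤ 2 otherwise (one of m,n even and the other odd). -/

import Mathlib

/-- A 2D word `w` is a 2D palindrome if it equals its reverse. -/
def IsPal2D {A : Type*} {m n : ℕ} (w : Fin m → Fin n → A) : Prop :=
  ∀ i j, w i j = w i.rev j.rev

/-- The conjugate of `w` obtained by cyclically shifting rows by `r` and columns by `c`. -/
def shift2D {A : Type*} {m n : ℕ} (w : Fin m → Fin n → A) (r c : ℕ) :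
    Fin m → Fin n → A :=
  fun i j => w ⟨((i : ℕ) + r) % m, Nat.mod_lt _ (by have := i.isLt; omega)⟩
               ⟨((j : ℕ) + c) % n, Nat.mod_lt _ (by have := j.isLt; omega)⟩

/-- The set of 2D palindromes in the conjugacy class of `w`. -/
def PALConj {A : Type*} {m n : ℕ} (w : Fin m → Fin n → A) :
    Set (Fin m → Fin n → A) :=
  {v | (∃ r c, r < m ∧ c < n ∧ v = shift2D w r c) ∧ IsPal2D v}

section helpers
variable {A : Type*} {m n : ℕ}

lemma shift2D_comp (w : Fin m → Fin n → A) (r c r' c' : ℕ) :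
    shift2D (shift2D w r c) r' c' = shift2D w (r' + r) (c' + c) := by
  funext i j
  simp only [shift2D]
  have hx : ((↑i + r') % m + r) % m = (↑i + (r' + r)) % m := by
    rw [Nat.mod_add_mod, Nat.add_assoc]
  have hy : ((↑j + c') % n + c) % n = (↑j + (c' + c)) % n := by
    rw [Nat.mod_add_mod, Nat.add_assoc]
  congr 1 <;> simp [Fin.ext_iff, hx, hy]

lemma shift2D_congr (w : Fin m → Fin n → A) {r r' c c' : ℕ} (hr : r % m = r' % m)
    (hc : c % n = c' % n) : shift2D w r c = shift2D w r' c' := by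
  funext i j
  simp only [shift2D]
  have hx : (↑i + r) % m = (↑i + r') % m := by
    rw [Nat.add_mod, hr, ← Nat.add_mod]
  have hy : (↑j + c) % n = (↑j + c') % n := by
    rw [Nat.add_mod, hc, ← Nat.add_mod]
  congr 1 <;> simp [Fin.ext_iff, hx, hy]

lemma shift2D_zero (w : Fin m → Fin n → A) : shift2D w 0 0 = w := by
  funext i j
  simp only [shift2D]
  congr 1 <;> simp [Fin.ext_iff, Nat.mod_eq_of_lt i.isLt, Nat.mod_eq_of_lt j.isLt]

lemma rev_mod (m i a : ℕ) (hi : i < m) :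
    m - (((m - (i + 1) + a) % m) + 1) = (i + (m - a % m)) % m := by
  have hm : 0 < m := by omega
  have ha' : a % m < m := Nat.mod_lt _ hm
  have hred : (m - (i + 1) + a) % m = (m - (i + 1) + a % m) % m := by
    conv_lhs => rw [Nat.add_mod]
    conv_rhs => rw [Nat.add_mod, Nat.mod_mod_of_dvd _ dvd_rfl]
  rw [hred]
  rcases le_or_gt (a % m) i with h | h
  · have h1 : m - (i + 1) + a % m < m := by omega
    have h2 : m ≤ i + (m - a % m) := by omega
    rw [Nat.mod_eq_of_lt h1, Nat.mod_eq_sub_mod h2,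
      Nat.mod_eq_of_lt (show i + (m - a % m) - m < m by omega)]
    omega
  · have h1 : m ≤ m - (i + 1) + a % m := by omega
    rw [Nat.mod_eq_sub_mod h1,
      Nat.mod_eq_of_lt (show m - (i + 1) + a % m - m < m by omega),
      Nat.mod_eq_of_lt (show i + (m - a % m) < m by omega)]
    omega

lemma pal_step1 (v : Fin m → Fin n → A)
    (a b : ℕ) (hv : IsPal2D v) (hu : IsPal2D (shift2D v a b)) :
    shift2D v a b = shift2D v (m - a % m) (n - b % n) := by
  funext i j
  have h := hu i j
  rw [h]
  simp only [shift2D]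
  rw [hv]
  congr 1
  · rw [Fin.ext_iff]
    simp only [Fin.val_rev]
    exact rev_mod m i a i.isLt
  · rw [Fin.ext_iff]
    simp only [Fin.val_rev]
    exact rev_mod n j b j.isLt

lemma add_sub_mod (hm : 0 < m) (a : ℕ) : (a + (m - a % m)) % m = 0 % m := by
  have ha' : a % m < m := Nat.mod_lt _ hm
  rcases Nat.eq_zero_or_pos (a % m) with h0 | h0
  · rw [h0, Nat.sub_zero, Nat.add_mod_right]
    simp [h0]
  · rw [Nat.add_mod a]
    rw [Nat.mod_eq_of_lt (show m - a % m < m by omega)]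
    rw [show a % m + (m - a % m) = m by omega, Nat.mod_self]
    simp

lemma pal_shift (hm : 0 < m) (hn : 0 < n) (v : Fin m → Fin n → A) (a b : ℕ)
    (hv : IsPal2D v) (hu : IsPal2D (shift2D v a b)) :
    shift2D v (a + a) (b + b) = v := by
  have s1 := pal_step1 v a b hv hu
  calc shift2D v (a + a) (b + b)
      = shift2D (shift2D v a b) a b := (shift2D_comp v a b a b).symm
    _ = shift2D (shift2D v (m - a % m) (n - b % n)) a b := by rw [s1]
    _ = shift2D v (a + (m - a % m)) (b + (n - b % n)) := shift2D_comp _ _ _ _ _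
    _ = shift2D v 0 0 := shift2D_congr v (add_sub_mod hm a) (add_sub_mod hn b)
    _ = v := shift2D_zero v

/-- in an additive group, `a • p = (a % 2) • p` when `p + p = 0`. -/
lemma nsmul_two_torsion {M : Type*} [AddCommGroup M] (p : M) (hp : p + p = 0) (a : ℕ) :
    a • p = (a % 2) • p := by
  conv_lhs => rw [← Nat.div_add_mod a 2]
  rw [add_nsmul, mul_nsmul, two_nsmul, hp, smul_zero, zero_add]

lemma prod_nsmul' {M N : Type*} [AddMonoid M] [AddMonoid N] (k : ℕ) (x : M) (y : N) :
    k • ((x, y) : M × N) = ((k • x, k • y) : M × N) := by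
  induction k with
  | zero => simp; rfl
  | succ k ih => rw [succ_nsmul, succ_nsmul, succ_nsmul, ih, Prod.mk_add_mk]

end helpers

/-- Core counting lemma: in a finite abelian group generated by two elements, the number of
elements of order dividing 2 is at most `d1 * d2`, where `dᵢ` may be taken to be `1` whenever
the corresponding generator is divisible by 2. -/
lemma torsion_bound {Q : Type*} [AddCommGroup Q] [Finite Q] (q1 q2 : Q)
    (hgen : ∀ x : Q, ∃ a b : ℕ, x = a • q1 + b • q2)
    (d1 d2 : ℕ)
    (h1 : d1 = 2 ∨ (d1 = 1 ∧ ∃ y : Q, y + y = q1))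
    (h2 : d2 = 2 ∨ (d2 = 1 ∧ ∃ y : Q, y + y = q2)) :
    Nat.card {x : Q // x + x = 0} ≤ d1 * d2 := by
  classical
  set φ : Q →+ Q := AddMonoidHom.mk' (fun x => x + x) (fun a b => add_add_add_comm a b a b) with hφ
  haveI : Finite (Q ⧸ φ.range) := Quotient.finite _
  haveI : Nonempty φ.range := ⟨0⟩
  -- `{x // x + x = 0}` is the kernel of doubling
  have hker : Nat.card {x : Q // x + x = 0} = Nat.card φ.ker := by
    apply Nat.card_congr
    apply Equiv.subtypeEquivRight
    intro x
    simp [hφ, AddMonoidHom.mem_ker, AddMonoidHom.mk'_apply]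
  -- duality : |ker φ| = |Q ⧸ range φ|
  have hdual : Nat.card φ.ker = Nat.card (Q ⧸ φ.range) := by
    have e1 : Nat.card Q = Nat.card (Q ⧸ φ.ker) * Nat.card φ.ker :=
      AddSubgroup.card_eq_card_quotient_mul_card_addSubgroup φ.ker
    have e2 : Nat.card Q = Nat.card (Q ⧸ φ.range) * Nat.card φ.range :=
      AddSubgroup.card_eq_card_quotient_mul_card_addSubgroup φ.range
    have e3 : Nat.card (Q ⧸ φ.ker) = Nat.card φ.range :=
      Nat.card_congr (QuotientAddGroup.quotientKerEquivRange φ).toEquiv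
    have hpos : 0 < Nat.card φ.range := Nat.card_pos
    rw [e3] at e1
    apply Nat.eq_of_mul_eq_mul_left hpos
    rw [← e1, e2, Nat.mul_comm]
  set mkh : Q →+ Q ⧸ φ.range := QuotientAddGroup.mk' φ.range with hmkh
  have htor : ∀ x : Q, mkh x + mkh x = 0 := by
    intro x
    rw [← map_add]
    exact (QuotientAddGroup.eq_zero_iff _).mpr ⟨x, rfl⟩
  have hp0 : ∀ x : Q, (∃ y : Q, y + y = x) → mkh x = 0 := by
    rintro x ⟨y, rfl⟩
    exact (QuotientAddGroup.eq_zero_iff _).mpr ⟨y, rfl⟩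
  have hmem : ∀ z : Q ⧸ φ.range,
      z = 0 ∨ z = mkh q1 ∨ z = mkh q2 ∨ z = mkh q1 + mkh q2 := by
    intro z
    obtain ⟨x, rfl⟩ := QuotientAddGroup.mk'_surjective φ.range z
    obtain ⟨a, b, rfl⟩ := hgen x
    rw [map_add, map_nsmul, map_nsmul, nsmul_two_torsion _ (htor q1),
      nsmul_two_torsion _ (htor q2)]
    rcases Nat.mod_two_eq_zero_or_one a with ha | ha <;>
        rcases Nat.mod_two_eq_zero_or_one b with hb | hb <;>
      rw [ha, hb] <;> simp [zero_nsmul, one_nsmul]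
  have hQR : ∀ (S : Set (Q ⧸ φ.range)), (∀ z, z ∈ S) → Nat.card (Q ⧸ φ.range) ≤ S.ncard := by
    intro S hS
    rw [← Set.ncard_univ]
    exact Set.ncard_le_ncard (fun z _ => hS z) (Set.toFinite S)
  rw [hker, hdual]
  rcases h1 with rfl | ⟨rfl, hy1⟩ <;> rcases h2 with rfl | ⟨rfl, hy2⟩
  · -- d1 = d2 = 2
    refine le_trans (hQR {0, mkh q1, mkh q2, mkh q1 + mkh q2} ?_) ?_
    · intro z
      rcases hmem z with h | h | h | h <;> simp [h]
    · have c1 := Set.ncard_insert_le (0 : Q ⧸ φ.range) {mkh q1, mkh q2, mkh q1 + mkh q2}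
      have c2 := Set.ncard_insert_le (mkh q1) ({mkh q2, mkh q1 + mkh q2} : Set (Q ⧸ φ.range))
      have c3 := Set.ncard_insert_le (mkh q2) ({mkh q1 + mkh q2} : Set (Q ⧸ φ.range))
      have c4 : ({mkh q1 + mkh q2} : Set (Q ⧸ φ.range)).ncard = 1 := Set.ncard_singleton _
      omega
  · -- d1 = 2, d2 = 1
    have h0 : mkh q2 = 0 := hp0 _ hy2
    refine le_trans (hQR {0, mkh q1} ?_) ?_
    · intro z
      rcases hmem z with h | h | h | h <;> rw [h] <;> simp [h0]
    · have c1 := Set.ncard_insert_le (0 : Q ⧸ φ.range) {mkh q1}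
      have c2 : ({mkh q1} : Set (Q ⧸ φ.range)).ncard = 1 := Set.ncard_singleton _
      omega
  · -- d1 = 1, d2 = 2
    have h0 : mkh q1 = 0 := hp0 _ hy1
    refine le_trans (hQR {0, mkh q2} ?_) ?_
    · intro z
      rcases hmem z with h | h | h | h <;> rw [h] <;> simp [h0]
    · have c1 := Set.ncard_insert_le (0 : Q ⧸ φ.range) {mkh q2}
      have c2 : ({mkh q2} : Set (Q ⧸ φ.range)).ncard = 1 := Set.ncard_singleton _
      omega
  · -- d1 = d2 = 1
    have h01 : mkh q1 = 0 := hp0 _ hy1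
    have h02 : mkh q2 = 0 := hp0 _ hy2
    refine le_trans (hQR {0} ?_) ?_
    · intro z
      rcases hmem z with h | h | h | h <;> rw [h] <;> simp [h01, h02]
    · simp

theorem stmt_10 {A : Type*} (m n : ℕ) (hm : 1 ≤ m) (hn : 1 ≤ n)
    (w : Fin m → Fin n → A) :
    (m % 2 = 0 → n % 2 = 0 → (PALConj w).ncard ≤ 4) ∧
    (m % 2 = 1 → n % 2 = 1 → (PALConj w).ncard ≤ 1) ∧
    (m % 2 ≠ n % 2 → (PALConj w).ncard ≤ 2) := by
  classical
  rcases Set.eq_empty_or_nonempty (PALConj w) with hP | ⟨v, hvP⟩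
  · simp [hP]
  obtain ⟨⟨r0, c0, hr0, hc0, hveq⟩, hvpal⟩ := hvP
  haveI : NeZero m := ⟨by omega⟩
  haveI : NeZero n := ⟨by omega⟩
  set G := ZMod m × ZMod n with hG
  let sh : G → (Fin m → Fin n → A) := fun g => shift2D v g.1.val g.2.val
  have sh_add : ∀ g h : G, sh (g + h) = shift2D (sh h) g.1.val g.2.val := by
    intro g h
    show shift2D v ((g + h).1.val) ((g + h).2.val)
        = shift2D (shift2D v h.1.val h.2.val) g.1.val g.2.val
    rw [shift2D_comp]
    exact shift2D_congr v
      (by rw [show (g + h).1 = g.1 + h.1 from rfl, ZMod.val_add,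
            Nat.mod_mod_of_dvd _ dvd_rfl])
      (by rw [show (g + h).2 = g.2 + h.2 from rfl, ZMod.val_add,
            Nat.mod_mod_of_dvd _ dvd_rfl])
  have sh_zero : sh 0 = v := by
    show shift2D v (0 : ZMod m).val (0 : ZMod n).val = v
    rw [ZMod.val_zero, ZMod.val_zero, shift2D_zero]
  let K : AddSubgroup G :=
    { carrier := {g | sh g = v}
      zero_mem' := sh_zero
      add_mem' := by
        intro g h hg hh
        show sh (g + h) = v
        rw [sh_add g h]
        show shift2D (sh h) _ _ = v
        rw [hh]
        exact hg
      neg_mem' := by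
        intro g hg
        show sh (-g) = v
        have h1 : sh (-g + g) = shift2D (sh g) (-g).1.val (-g).2.val := sh_add (-g) g
        rw [neg_add_cancel, sh_zero, hg] at h1
        exact h1.symm }
  have shK : ∀ g h : G, h ∈ K → sh (h + g) = sh g := by
    intro g h hh
    rw [add_comm, sh_add g h]
    show shift2D (sh h) _ _ = _
    rw [hh]
  have main : ∀ u ∈ PALConj w, ∃ g : G, u = sh g ∧ (g + g) ∈ K := by
    rintro u ⟨⟨r, c, hr, hc, hueq⟩, hupal⟩
    have key : ∀ gg : G, u = sh gg → (gg + gg) ∈ K := by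
      intro gg hgg
      have hpal2 : IsPal2D (shift2D v gg.1.val gg.2.val) := by
        rw [hgg] at hupal; exact hupal
      have h2 := pal_shift (by omega) (by omega) v gg.1.val gg.2.val hvpal hpal2
      show sh (gg + gg) = v
      calc sh (gg + gg)
          = shift2D v (gg.1.val + gg.1.val) (gg.2.val + gg.2.val) := by
            apply shift2D_congr
            · rw [show (gg + gg).1 = gg.1 + gg.1 from rfl, ZMod.val_add,
                Nat.mod_mod_of_dvd _ dvd_rfl]
            · rw [show (gg + gg).2 = gg.2 + gg.2 from rfl, ZMod.val_add,
                Nat.mod_mod_of_dvd _ dvd_rfl]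
        _ = v := h2
    have husg : u = sh ((r : ZMod m) - (r0 : ZMod m), (c : ZMod n) - (c0 : ZMod n)) := by
      rw [hueq]
      show shift2D w r c = shift2D v
        ((r : ZMod m) - (r0 : ZMod m)).val ((c : ZMod n) - (c0 : ZMod n)).val
      rw [hveq, shift2D_comp]
      apply shift2D_congr
      · show r % m = (((r : ZMod m) - (r0 : ZMod m)).val + r0) % m
        have : ((r : ℕ) : ZMod m)
            = ((((r : ZMod m) - (r0 : ZMod m)).val + r0 : ℕ) : ZMod m) := by
          push_cast
          rw [ZMod.natCast_rightInverse ((r : ZMod m) - (r0 : ZMod m))]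
          ring
        exact (ZMod.natCast_eq_natCast_iff _ _ _).mp this
      · show c % n = (((c : ZMod n) - (c0 : ZMod n)).val + c0) % n
        have : ((c : ℕ) : ZMod n)
            = ((((c : ZMod n) - (c0 : ZMod n)).val + c0 : ℕ) : ZMod n) := by
          push_cast
          rw [ZMod.natCast_rightInverse ((c : ZMod n) - (c0 : ZMod n))]
          ring
        exact (ZMod.natCast_eq_natCast_iff _ _ _).mp this
    exact ⟨_, husg, key _ husg⟩
  haveI : Finite (G ⧸ K) := Quotient.finite _
  have hinj : (PALConj w).ncard ≤ Nat.card {x : G ⧸ K // x + x = 0} := by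
    rw [← Nat.card_coe_set_eq]
    choose gf hgf1 hgf2 using (fun u : PALConj w => main u u.2)
    have hker : ∀ u : PALConj w,
        (QuotientAddGroup.mk' K) (gf u) + (QuotientAddGroup.mk' K) (gf u) = 0 := by
      intro u
      rw [← map_add]
      exact (QuotientAddGroup.eq_zero_iff _).mpr (hgf2 u)
    have hfinj : Function.Injective (fun u : PALConj w =>
        (⟨(QuotientAddGroup.mk' K) (gf u), hker u⟩ : {x : G ⧸ K // x + x = 0})) := by
      intro u1 u2 h
      have h' : (QuotientAddGroup.mk' K) (gf u1) = (QuotientAddGroup.mk' K) (gf u2) :=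
        congrArg Subtype.val h
      obtain ⟨z, hzK, hz⟩ := (QuotientAddGroup.mk'_eq_mk' K).mp h'
      have hs : sh (gf u2) = sh (gf u1) := by
        rw [← hz, add_comm]
        exact shK (gf u1) z hzK
      apply Subtype.ext
      rw [hgf1 u1, hgf1 u2, hs]
    exact Nat.card_le_card_of_injective _ hfinj
  have hgen : ∀ x : G ⧸ K, ∃ a b : ℕ,
      x = a • (QuotientAddGroup.mk' K ((1 : ZMod m), (0 : ZMod n)))
        + b • (QuotientAddGroup.mk' K ((0 : ZMod m), (1 : ZMod n))) := by
    intro x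
    obtain ⟨g, rfl⟩ := QuotientAddGroup.mk'_surjective K x
    refine ⟨g.1.val, g.2.val, ?_⟩
    have hdec : g = g.1.val • ((1 : ZMod m), (0 : ZMod n))
        + g.2.val • ((0 : ZMod m), (1 : ZMod n)) := by
      rw [prod_nsmul', prod_nsmul', Prod.mk_add_mk]
      rw [smul_zero, smul_zero, add_zero, zero_add, nsmul_eq_mul, nsmul_eq_mul,
        mul_one, mul_one, ZMod.natCast_rightInverse g.1, ZMod.natCast_rightInverse g.2]
    conv_lhs => rw [hdec]
    rw [map_add, map_nsmul, map_nsmul]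
  have hdiv1 : m % 2 = 1 → ∃ y : G ⧸ K,
      y + y = QuotientAddGroup.mk' K ((1 : ZMod m), (0 : ZMod n)) := by
    intro hodd
    refine ⟨QuotientAddGroup.mk' K (((((m + 1) / 2 : ℕ)) : ZMod m), (0 : ZMod n)), ?_⟩
    rw [← map_add]
    congr 1
    rw [Prod.mk_add_mk, ← Nat.cast_add, show (m + 1) / 2 + (m + 1) / 2 = m + 1 by omega]
    rw [add_zero]
    congr 1
    push_cast [ZMod.natCast_self]
    ring
  have hdiv2 : n % 2 = 1 → ∃ y : G ⧸ K,
      y + y = QuotientAddGroup.mk' K ((0 : ZMod m), (1 : ZMod n)) := by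
    intro hodd
    refine ⟨QuotientAddGroup.mk' K ((0 : ZMod m), ((((n + 1) / 2 : ℕ)) : ZMod n)), ?_⟩
    rw [← map_add]
    congr 1
    rw [Prod.mk_add_mk, ← Nat.cast_add, show (n + 1) / 2 + (n + 1) / 2 = n + 1 by omega]
    rw [add_zero]
    congr 1
    push_cast [ZMod.natCast_self]
    ring
  refine ⟨?_, ?_, ?_⟩
  · intro _ _
    have := torsion_bound _ _ hgen 2 2 (Or.inl rfl) (Or.inl rfl)
    omega
  · intro hm1 hn1
    have := torsion_bound _ _ hgen 1 1 (Or.inr ⟨rfl, hdiv1 hm1⟩) (Or.inr ⟨rfl, hdiv2 hn1⟩)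
    omega
  · intro hne
    have hcases : (m % 2 = 1 ∧ n % 2 = 0) ∨ (m % 2 = 0 ∧ n % 2 = 1) := by omega
    rcases hcases with ⟨h1, _⟩ | ⟨_, h2⟩
    · have := torsion_bound _ _ hgen 1 2 (Or.inr ⟨rfl, hdiv1 h1⟩) (Or.inl rfl)
      omega
    · have := torsion_bound _ _ hgen 2 1 (Or.inl rfl) (Or.inr ⟨rfl, hdiv2 h2⟩)
      omega
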